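/- A ring R is weak symmetric if and only if for all a, b, c in R, abc nilpotent implies bac nilpotent. -/
import Mathlib

lemma nilp_swap {R : Type*} [Ring R] {x y : R} (h : IsNilpotent (x * y)) :
    IsNilpotent (y * x) := by
  obtain ⟨n, hn⟩ := h
  refine ⟨n + 1, ?_⟩
  have key : ∀ m : ℕ, (y * x) ^ (m + 1) = y * (x * y) ^ m * x := by
    intro m
    induction m with
    | zero => simp
    | succ k ih => rw [pow_succ, ih, pow_succ]; noncomm_ring
  rw [key, hn, mul_zero, zero_mul]

theorem stmt_8 (R : Type*) [Ring R] :
    (∀ a b c : R, IsNilpotent (a * b * c) → IsNilpotent (a * c * b)) ↔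
      (∀ a b c : R, IsNilpotent (a * b * c) → IsNilpotent (b * a * c)) := by
  constructor
  · intro h a b c habc
    have h1 : IsNilpotent (c * (a * b)) := nilp_swap habc
    have h2 : IsNilpotent (c * b * a) := h c a b (by rw [mul_assoc]; exact h1)
    rw [mul_assoc] at h2
    exact nilp_swap h2
  · intro h a b c habc
    have h1 : IsNilpotent (b * c * a) := by
      exact nilp_swap (x := a) (y := b * c) (by rw [← mul_assoc]; exact habc)
    have h2 : IsNilpotent (c * b * a) := h b c a h1
    have := nilp_swap (x := c * b) (y := a) h2
    rwa [← mul_assoc] at this
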